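/- Let N be a symmetric n×n real matrix with nonnegative entries and operator norm at most 1, and suppose at most k eigenvalues of N exceed τ > 0. Then for every integer t ≥ 1, Tr(N^{2t+2}) ≤ 2(k + n·τ^{2t+1}). -/

import Mathlib

open Matrix Finset

lemma trace_pow_eq' {n m : ℕ} (N : Matrix (Fin n) (Fin n) ℝ) (hN : N.IsHermitian) :
    (N ^ m).trace = ∑ i, hN.eigenvalues i ^ m := by
  set U : Matrix (Fin n) (Fin n) ℝ := (hN.eigenvectorUnitary : Matrix (Fin n) (Fin n) ℝ) with hUdef
  have hU1 : star U * U = 1 := (Matrix.mem_unitaryGroup_iff'.mp hN.eigenvectorUnitary.2)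
  have hU2 : U * star U = 1 := (Matrix.mem_unitaryGroup_iff.mp hN.eigenvectorUnitary.2)
  set D : Matrix (Fin n) (Fin n) ℝ := diagonal (RCLike.ofReal ∘ hN.eigenvalues) with hDdef
  have key : ∀ m : ℕ, N ^ m = U * D ^ m * star U := by
    intro m
    induction m with
    | zero => simp [hU2]
    | succ m ih =>
      rw [pow_succ, ih, pow_succ]
      nth_rewrite 1 [hN.spectral_theorem]
      simp only [Unitary.conjStarAlgAut_apply, mul_assoc, ← hUdef, ← hDdef]
      rw [← mul_assoc (star U) U, hU1, one_mul]
  rw [key m, trace_mul_cycle, hU1, one_mul, hDdef, diagonal_pow, trace_diagonal]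
  simp

lemma pow_entry_nonneg' {n : ℕ} (N : Matrix (Fin n) (Fin n) ℝ)
    (hpos : ∀ i j, 0 ≤ N i j) (m : ℕ) : ∀ i j, 0 ≤ (N ^ m) i j := by
  induction m with
  | zero => intro i j; simp [Matrix.one_apply]; positivity
  | succ m ih =>
    intro i j
    rw [pow_succ, Matrix.mul_apply]
    exact Finset.sum_nonneg fun l _ => mul_nonneg (ih i l) (hpos l j)

theorem stmt_0 {n : ℕ} (N : Matrix (Fin n) (Fin n) ℝ) (hN : N.IsHermitian)
    (hpos : ∀ i j, 0 ≤ N i j)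
    (hnorm : ∀ i, |hN.eigenvalues i| ≤ 1)
    (τ : ℝ) (hτ : 0 < τ) (k : ℕ)
    (hrank : (Finset.univ.filter (fun i => τ < hN.eigenvalues i)).card ≤ k)
    (t : ℕ) (ht : 1 ≤ t) :
    (N ^ (2 * t + 2)).trace ≤ 2 * (k + n * τ ^ (2 * t + 1)) := by
  classical
  set lam := hN.eigenvalues with hlam
  set m := 2 * t + 1 with hm
  -- trace of odd power nonneg
  have hodd : (0:ℝ) ≤ ∑ i, lam i ^ m := by
    rw [← trace_pow_eq' N hN, Matrix.trace]
    exact Finset.sum_nonneg fun i _ => pow_entry_nonneg' N hpos m i i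
  have htr : (N ^ (2 * t + 2)).trace = ∑ i, lam i ^ (2 * t + 2) := trace_pow_eq' N hN
  rw [htr]
  set P := Finset.univ.filter (fun i => (0:ℝ) ≤ lam i) with hP
  set T := Finset.univ.filter (fun i => τ < lam i) with hT
  -- step 1: Σ λ^{2t+2} ≤ Σ |λ|^m
  have h1 : ∑ i, lam i ^ (2 * t + 2) ≤ ∑ i, |lam i| ^ m := by
    apply Finset.sum_le_sum
    intro i _
    have : lam i ^ (2 * t + 2) = |lam i| ^ (2 * t + 2) := by
      rw [show 2 * t + 2 = 2 * (t + 1) by ring, pow_mul, pow_mul, sq_abs]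
    rw [this]
    exact pow_le_pow_of_le_one (abs_nonneg _) (hnorm i) (by omega)
  -- step 2: Σ |λ|^m ≤ 2 Σ_P λ^m
  have h2 : ∑ i, |lam i| ^ m ≤ 2 * ∑ i ∈ P, lam i ^ m := by
    have hsplit : ∑ i, |lam i| ^ m = ∑ i ∈ P, lam i ^ m + ∑ i ∈ Pᶜ, |lam i| ^ m := by
      rw [← Finset.sum_add_sum_compl P]
      congr 1
      apply Finset.sum_congr rfl
      intro i hi
      rw [abs_of_nonneg (by simpa [hP] using hi)]
    have hcompl : ∑ i ∈ Pᶜ, |lam i| ^ m = - ∑ i ∈ Pᶜ, lam i ^ m := by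
      rw [← Finset.sum_neg_distrib]
      apply Finset.sum_congr rfl
      intro i hi
      have hneg : lam i < 0 := by
        simp only [hP, Finset.compl_filter, Finset.mem_filter] at hi
        linarith [not_le.mp hi.2]
      rw [abs_of_neg hneg, hm, Odd.neg_pow ⟨t, by ring⟩]
    have hsum : ∑ i ∈ P, lam i ^ m + ∑ i ∈ Pᶜ, lam i ^ m = ∑ i, lam i ^ m :=
      Finset.sum_add_sum_compl P _
    rw [hsplit, hcompl]
    linarith
  -- step 3: Σ_P λ^m ≤ k + n τ^m
  have h3 : ∑ i ∈ P, lam i ^ m ≤ (k : ℝ) + n * τ ^ m := by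
    have hTP : T ⊆ P := by
      intro i hi
      simp only [hT, Finset.mem_filter] at hi
      simp only [hP, Finset.mem_filter]
      exact ⟨hi.1, le_of_lt (hτ.trans hi.2)⟩
    rw [← Finset.sum_sdiff hTP]
    have hb1 : ∑ i ∈ T, lam i ^ m ≤ (k : ℝ) := by
      calc ∑ i ∈ T, lam i ^ m ≤ ∑ _i ∈ T, (1:ℝ) := by
            apply Finset.sum_le_sum
            intro i _
            exact (le_abs_self _).trans (by
              rw [abs_pow]; exact pow_le_one₀ (abs_nonneg _) (hnorm i))
        _ = T.card := by simp
        _ ≤ k := by exact_mod_cast hrank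
    have hb2 : ∑ i ∈ P \ T, lam i ^ m ≤ (n:ℝ) * τ ^ m := by
      calc ∑ i ∈ P \ T, lam i ^ m ≤ ∑ _i ∈ P \ T, τ ^ m := by
            apply Finset.sum_le_sum
            intro i hi
            simp only [hP, hT, Finset.mem_sdiff, Finset.mem_filter] at hi
            have h0 : 0 ≤ lam i := hi.1.2
            have hle : lam i ≤ τ := le_of_not_gt (fun h => hi.2 ⟨Finset.mem_univ i, h⟩)
            exact pow_le_pow_left₀ h0 hle m
        _ = (P \ T).card * τ ^ m := by rw [Finset.sum_const, nsmul_eq_mul]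
        _ ≤ (n:ℝ) * τ ^ m := by
            apply mul_le_mul_of_nonneg_right _ (le_of_lt (pow_pos hτ m))
            exact_mod_cast (Finset.card_le_card (Finset.subset_univ _)).trans_eq
              (Finset.card_univ.trans (Fintype.card_fin n))
    linarith
  linarith
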